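/- Assume β + λω_k ≠ 0 for all k = 0,…,N−1. Let δ = min{β, 2λ sin²(π/N)} > 0. Then there exists a constant C > 0 (depending only on N, λ, β) such that for every z ∈ ℂ^{2N} whose first N coordinates sum to zero (Σ_{n=1}^{N} z_n = 0) and every t ≥ 0, ‖ e^{Bt} z ‖ ≤ C · ‖z‖ · e^{−δ t}; in particular e^{Bt} z → 0 as t → ∞ for all such z. -/

import Mathlib

open Matrix Complex Finset Filter

noncomputable section

/-- The N×N matrix with -1 on the diagonal and 1 on the (cyclic) superdiagonal. -/
def ringMat (N : ℕ) : Matrix (Fin N) (Fin N) ℝ :=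
  fun n m => if (m : ℕ) = (n : ℕ) then -1 else if (m : ℕ) = ((n : ℕ) + 1) % N then 1 else 0

/-- γ_k = e^{2πik/N} -/
def gam (N k : ℕ) : ℂ := Complex.exp (2 * Real.pi * Complex.I * k / N)

/-- The 2N×2N block matrix B = [[λA, A], [0, −β I_N]] (complexified). -/
def blockB (N : ℕ) (lam beta : ℝ) : Matrix (Fin N ⊕ Fin N) (Fin N ⊕ Fin N) ℂ :=
  Matrix.fromBlocks ((lam : ℂ) • (ringMat N).map Complex.ofReal)
    ((ringMat N).map Complex.ofReal) 0 (-(beta : ℂ) • 1)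

/-- The Euclidean norm on ℂ^{2N}. -/
def eucNorm {N : ℕ} (v : Fin N ⊕ Fin N → ℂ) : ℝ := Real.sqrt (∑ i, ‖v i‖ ^ 2)

/-- compatibility: the complex absolute value as an `AbsoluteValue`. -/
def Complex.abs : AbsoluteValue ℂ ℝ where
  toFun := fun z => ‖z‖
  map_mul' := norm_mul
  nonneg' := norm_nonneg
  eq_zero' := fun _ => norm_eq_zero
  add_le' := norm_add_le

lemma Complex.norm_eq_abs (z : ℂ) : ‖z‖ = Complex.abs z := rfl

lemma Complex.abs_exp (z : ℂ) : Complex.abs (Complex.exp z) = Real.exp z.re := Complex.norm_exp z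

lemma Complex.abs_natCast (n : ℕ) : Complex.abs (n : ℂ) = n := by
  rw [← Complex.norm_eq_abs]; simp

/-! ### auxiliary: Euclidean norm lemmas -/

lemma eucNorm_eq_norm {N : ℕ} (v : Fin N ⊕ Fin N → ℂ) :
    eucNorm v = ‖(WithLp.linearEquiv 2 ℂ (Fin N ⊕ Fin N → ℂ)).symm v‖ := by
  rw [EuclideanSpace.norm_eq]
  unfold eucNorm
  congr 1

lemma eucNorm_nonneg {N : ℕ} (v : Fin N ⊕ Fin N → ℂ) : 0 ≤ eucNorm v := Real.sqrt_nonneg _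

lemma eucNorm_smul {N : ℕ} (c : ℂ) (v : Fin N ⊕ Fin N → ℂ) :
    eucNorm (c • v) = Complex.abs c * eucNorm v := by
  rw [eucNorm_eq_norm, eucNorm_eq_norm, _root_.map_smul, norm_smul, Complex.norm_eq_abs]

lemma eucNorm_sum_le {N : ℕ} {ι : Type*} (s : Finset ι) (f : ι → (Fin N ⊕ Fin N → ℂ)) :
    eucNorm (∑ k ∈ s, f k) ≤ ∑ k ∈ s, eucNorm (f k) := by
  simp_rw [eucNorm_eq_norm, map_sum]; exact norm_sum_le _ _

lemma eucNorm_add_le {N : ℕ} (v w : Fin N ⊕ Fin N → ℂ) :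
    eucNorm (v + w) ≤ eucNorm v + eucNorm w := by
  simp_rw [eucNorm_eq_norm, map_add]; exact norm_add_le _ _

lemma abs_le_eucNorm {N : ℕ} (v : Fin N ⊕ Fin N → ℂ) (i : Fin N ⊕ Fin N) :
    Complex.abs (v i) ≤ eucNorm v := by
  rw [show Complex.abs (v i) = Real.sqrt (Complex.abs (v i) ^ 2) from
    (Real.sqrt_sq (AbsoluteValue.nonneg _ _)).symm]
  exact Real.sqrt_le_sqrt (Finset.single_le_sum (f := fun j => Complex.abs (v j) ^ 2)
    (fun j _ => sq_nonneg _) (mem_univ i))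

lemma eucNorm_le_sum {N : ℕ} (v : Fin N ⊕ Fin N → ℂ) :
    eucNorm v ≤ ∑ i, Complex.abs (v i) := by
  rw [show (∑ i, Complex.abs (v i)) = Real.sqrt ((∑ i, Complex.abs (v i)) ^ 2) from
    (Real.sqrt_sq (Finset.sum_nonneg fun i _ => AbsoluteValue.nonneg _ _)).symm]
  exact Real.sqrt_le_sqrt (Finset.sum_sq_le_sq_sum_of_nonneg (fun i _ => norm_nonneg _))

/-! ### auxiliary: roots of unity -/

lemma gam_pow (N j i : ℕ) : gam N j ^ i = gam N (j * i) := by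
  unfold gam
  rw [← Complex.exp_nat_mul]
  congr 1
  push_cast
  ring

lemma gam_comm (N j i : ℕ) : gam N j ^ i = gam N i ^ j := by
  rw [gam_pow, gam_pow, mul_comm]

lemma gam_dvd_eq_one {N j : ℕ} (hN : N ≠ 0) (h : N ∣ j) : gam N j = 1 := by
  obtain ⟨c, rfl⟩ := h
  unfold gam
  have hNc : (N : ℂ) ≠ 0 := Nat.cast_ne_zero.mpr hN
  rw [show 2 * (Real.pi : ℂ) * Complex.I * (N * c : ℕ) / N = (c : ℤ) * (2 * Real.pi * Complex.I)
    by push_cast; field_simp]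
  exact Complex.exp_int_mul_two_pi_mul_I c

lemma gam_ne_one {N j : ℕ} (hN : N ≠ 0) (h : ¬ N ∣ j) : gam N j ≠ 1 := by
  intro hg
  rw [gam, Complex.exp_eq_one_iff] at hg
  obtain ⟨n, hn⟩ := hg
  have hNc : (N : ℂ) ≠ 0 := Nat.cast_ne_zero.mpr hN
  have h2 : (2 : ℂ) * Real.pi * Complex.I ≠ 0 := by
    simp [Real.pi_ne_zero, Complex.I_ne_zero, Complex.ofReal_ne_zero]
  have hj : (j : ℂ) = n * N := by
    field_simp at hn
    apply mul_left_cancel₀ h2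
    linear_combination (2 * (Real.pi : ℂ) * Complex.I) * hn
  have hj2 : (j : ℤ) = n * N := by exact_mod_cast hj
  exact h (Int.natCast_dvd_natCast.mp ⟨n, by linarith⟩)

lemma gam_zero (N : ℕ) : gam N 0 = 1 := by
  simp [gam]

lemma gam_geom_sum {N : ℕ} (hN : 2 ≤ N) (j : ℕ) :
    ∑ k : Fin N, gam N j ^ (k : ℕ) = if N ∣ j then (N : ℂ) else 0 := by
  have hN0 : N ≠ 0 := by omega
  split_ifs with h
  · simp [gam_dvd_eq_one hN0 h]
  · rw [Fin.sum_univ_eq_sum_range (fun k => gam N j ^ k), geom_sum_eq (gam_ne_one hN0 h),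
      gam_pow, gam_dvd_eq_one hN0 ⟨j, mul_comm j N⟩, sub_self, zero_div]

lemma gam_pow_N {N k : ℕ} (hN : N ≠ 0) : gam N k ^ N = 1 := by
  rw [gam_pow]; exact gam_dvd_eq_one hN ⟨k, mul_comm k N⟩

lemma gam_pow_mod {N k a : ℕ} (hN : N ≠ 0) : gam N k ^ (a % N) = gam N k ^ a := by
  conv_rhs => rw [← Nat.mod_add_div a N]
  rw [pow_add, pow_mul, gam_pow_N hN, one_pow, mul_one]

lemma gam_abs (N k : ℕ) : Complex.abs (gam N k) = 1 := by
  rw [gam, show 2 * (Real.pi : ℂ) * Complex.I * k / N = ((2 * Real.pi * k / N : ℝ) : ℂ) * Complex.I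
    by push_cast; ring, Complex.abs_exp]
  simp [Complex.mul_re]

lemma gam_re (N k : ℕ) : (gam N k).re = Real.cos (2 * Real.pi * k / N) := by
  rw [gam, show 2 * (Real.pi : ℂ) * Complex.I * k / N = ((2 * Real.pi * k / N : ℝ) : ℂ) * Complex.I
    by push_cast; ring]
  exact Complex.exp_ofReal_mul_I_re _

/-- the key divisibility criterion -/
lemma dvd_iff_eq {N n m : ℕ} (hN : 2 ≤ N) (hn : n < N) (hm : m < N) :
    N ∣ (N - 1) * n + m ↔ n = m := by
  constructor
  · rintro ⟨q, hq⟩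
    have hq' : (N : ℤ) * n - n + m = N * q := by
      have h := congrArg (Nat.cast : ℕ → ℤ) hq
      push_cast [Nat.cast_sub (by omega : 1 ≤ N)] at h
      linarith [h]
    have h2 : (m : ℤ) - n = N * ((q : ℤ) - n) := by linear_combination hq'
    rcases lt_trichotomy ((q : ℤ) - n) 0 with h | h | h
    · have hd : (q : ℤ) - n ≤ -1 := by omega
      have := mul_le_mul_of_nonneg_left hd (show (0:ℤ) ≤ N by positivity)
      have hb1 : (m : ℤ) ≥ 0 := by positivity
      have hb2 : (n : ℤ) < N := by exact_mod_cast hn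
      nlinarith
    · rw [h, mul_zero] at h2
      omega
    · have hd : (1 : ℤ) ≤ (q : ℤ) - n := by omega
      have := mul_le_mul_of_nonneg_left hd (show (0:ℤ) ≤ N by positivity)
      have hb1 : (n : ℤ) ≥ 0 := by positivity
      have hb2 : (m : ℤ) < N := by exact_mod_cast hm
      nlinarith
  · rintro rfl
    exact ⟨n, by rw [Nat.sub_mul, one_mul,
      Nat.sub_add_cancel (Nat.le_mul_of_pos_left n (by omega))]⟩

/-! ### auxiliary: eigenvectors -/

def fv (N k : ℕ) : Fin N → ℂ := fun n => gam N k ^ (n : ℕ)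

lemma fv_abs (N k : ℕ) (n : Fin N) : Complex.abs (fv N k n) = 1 := by
  rw [fv, map_pow, gam_abs, one_pow]

/-- Fourier inversion -/
lemma fourier_inv {N : ℕ} (hN : 2 ≤ N) (y : Fin N → ℂ) (m : Fin N) :
    ∑ k : Fin N, ((N : ℂ)⁻¹ * ∑ n : Fin N, gam N k ^ ((N - 1) * (n : ℕ)) * y n) * fv N k m
      = y m := by
  have hN0 : (N : ℂ) ≠ 0 := Nat.cast_ne_zero.mpr (by omega)
  have step : ∀ k : Fin N,
      ((N : ℂ)⁻¹ * ∑ n : Fin N, gam N k ^ ((N - 1) * (n : ℕ)) * y n) * fv N k m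
        = (N : ℂ)⁻¹ * ∑ n : Fin N, gam N ((N - 1) * (n : ℕ) + (m : ℕ)) ^ (k : ℕ) * y n := by
    intro k
    rw [mul_assoc, Finset.sum_mul]
    congr 1
    apply Finset.sum_congr rfl
    intro n _
    show gam N k ^ ((N - 1) * (n : ℕ)) * y n * gam N k ^ (m : ℕ) = _
    rw [gam_comm N ((N - 1) * (n : ℕ) + (m : ℕ)) k, pow_add]
    ring
  rw [Finset.sum_congr rfl (fun k _ => step k), ← Finset.mul_sum, Finset.sum_comm]
  have inner : ∀ n : Fin N,
      (∑ k : Fin N, gam N ((N - 1) * (n : ℕ) + (m : ℕ)) ^ (k : ℕ) * y n)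
        = (if n = m then (N : ℂ) else 0) * y n := by
    intro n
    rw [← Finset.sum_mul, gam_geom_sum hN]
    congr 2
    simp only [dvd_iff_eq hN n.isLt m.isLt, Fin.val_eq_val]
  rw [Finset.sum_congr rfl (fun n _ => inner n)]
  rw [show (∑ n : Fin N, (if n = m then (N : ℂ) else 0) * y n)
      = ∑ n : Fin N, (if n = m then (N : ℂ) * y n else 0) from
    Finset.sum_congr rfl (fun n _ => by split_ifs <;> simp)]
  rw [Finset.sum_ite_eq' univ m (fun n => (N : ℂ) * y n)]
  simp [hN0]

lemma ringMat_mulVec {N : ℕ} (hN : 2 ≤ N) (k : ℕ) :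
    ((ringMat N).map Complex.ofReal).mulVec (fv N k) = (gam N k - 1) • fv N k := by
  funext n
  have hN0 : N ≠ 0 := by omega
  have hlt : ((n : ℕ) + 1) % N < N := Nat.mod_lt _ (by omega)
  set n' : Fin N := ⟨((n : ℕ) + 1) % N, hlt⟩ with hn'
  have hne : n' ≠ n := by
    intro hEq
    apply_fun (Fin.val) at hEq
    simp only [hn'] at hEq
    rcases Nat.lt_or_ge ((n : ℕ) + 1) N with h1 | h1
    · rw [Nat.mod_eq_of_lt h1] at hEq; omega
    · have h2 : ((n : ℕ) + 1) = N := by omega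
      rw [h2, Nat.mod_self] at hEq; omega
  have key : ∀ m : Fin N, ((ringMat N).map Complex.ofReal) n m * fv N k m
      = (if m = n then -(fv N k n) else 0) + (if m = n' then fv N k n' else 0) := by
    intro m
    simp only [ringMat, Matrix.map_apply]
    by_cases h1 : m = n
    · subst h1
      have : (m : ℕ) ≠ ((m : ℕ) + 1) % N := fun h => hne (Fin.ext h.symm)
      simp [this, Ne.symm hne]
    · by_cases h2 : m = n'
      · subst h2
        have hv : (n' : ℕ) ≠ (n : ℕ) := fun h => hne (Fin.ext h)
        have hv' : (n' : ℕ) = ((n : ℕ) + 1) % N := rfl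
        have hv2 : ((n : ℕ) + 1) % N ≠ (n : ℕ) := hv' ▸ hv
        simp [hv, hv', hv2, h1]
      · have hv1 : (m : ℕ) ≠ (n : ℕ) := fun h => h1 (Fin.ext h)
        have hv2 : (m : ℕ) ≠ ((n : ℕ) + 1) % N := fun h => h2 (Fin.ext h)
        simp [hv1, hv2, h1, h2]
  show ∑ m, ((ringMat N).map Complex.ofReal) n m * fv N k m = _
  rw [Finset.sum_congr rfl (fun m _ => key m), Finset.sum_add_distrib,
    Finset.sum_ite_eq' univ n (fun _ => -(fv N k n)),
    Finset.sum_ite_eq' univ n' (fun _ => fv N k n')]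
  simp only [mem_univ, if_true]
  have hfv : fv N k n' = gam N k ^ ((n : ℕ) + 1) := gam_pow_mod hN0
  show -(fv N k n) + fv N k n' = (gam N k - 1) * fv N k n
  rw [hfv]
  rw [pow_succ]
  simp only [fv]
  ring

lemma blockB_mulVec_u {N : ℕ} (hN : 2 ≤ N) (lam beta : ℝ) (k : ℕ) :
    (blockB N lam beta).mulVec (Sum.elim (fv N k) 0) =
      ((lam : ℂ) * (gam N k - 1)) • Sum.elim (fv N k) 0 := by
  rw [blockB, Matrix.fromBlocks_mulVec]
  have h1 : (Sum.elim (fv N k) (0 : Fin N → ℂ)) ∘ Sum.inl = fv N k := rfl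
  have h2 : (Sum.elim (fv N k) (0 : Fin N → ℂ)) ∘ Sum.inr = 0 := rfl
  rw [h1, h2, Matrix.smul_mulVec, ringMat_mulVec hN, Matrix.mulVec_zero,
    Matrix.mulVec_zero, Matrix.zero_mulVec, add_zero, add_zero, smul_smul]
  funext i
  cases i with
  | inl n => simp
  | inr n => simp

lemma blockB_mulVec_w {N : ℕ} (hN : 2 ≤ N) (lam beta : ℝ) (k : ℕ) (c : ℂ)
    (hc : (lam : ℂ) * (gam N k - 1) * c + (gam N k - 1) = -(beta : ℂ) * c) :
    (blockB N lam beta).mulVec (Sum.elim (c • fv N k) (fv N k)) =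
      (-(beta : ℂ)) • Sum.elim (c • fv N k) (fv N k) := by
  rw [blockB, Matrix.fromBlocks_mulVec]
  have h1 : (Sum.elim (c • fv N k) (fv N k)) ∘ Sum.inl = c • fv N k := rfl
  have h2 : (Sum.elim (c • fv N k) (fv N k)) ∘ Sum.inr = fv N k := rfl
  rw [h1, h2, Matrix.smul_mulVec, Matrix.mulVec_smul, ringMat_mulVec hN,
    Matrix.zero_mulVec, Matrix.smul_mulVec, Matrix.one_mulVec, zero_add]
  funext i
  cases i with
  | inl n =>
    simp only [Sum.elim_inl, Pi.add_apply, Pi.smul_apply, smul_eq_mul]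
    linear_combination (fv N k n) * hc
  | inr n => simp

/-- exponential of a matrix applied to an eigenvector -/
theorem exp_mulVec_eigen {m : Type*} [Fintype m] [DecidableEq m]
    (M : Matrix m m ℂ) (v : m → ℂ) (μ : ℂ) (h : M.mulVec v = μ • v) :
    (NormedSpace.exp M).mulVec v = Complex.exp μ • v := by
  letI : SeminormedRing (Matrix m m ℂ) := Matrix.linftyOpSemiNormedRing
  letI : NormedRing (Matrix m m ℂ) := Matrix.linftyOpNormedRing
  letI : NormedAlgebra ℂ (Matrix m m ℂ) := Matrix.linftyOpNormedAlgebra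
  have hpow : ∀ n : ℕ, (M ^ n).mulVec v = μ ^ n • v := by
    intro n; induction n with
    | zero => simp
    | succ n ih =>
      rw [pow_succ', pow_succ', ← Matrix.mulVec_mulVec, ih, Matrix.mulVec_smul, h, smul_smul,
        mul_comm]
  have hsum : HasSum (fun n : ℕ => ((Nat.factorial n : ℂ))⁻¹ • M ^ n) (NormedSpace.exp M) :=
    NormedSpace.exp_series_hasSum_exp' (𝕂 := ℂ) M
  let φ : Matrix m m ℂ →ₗ[ℂ] (m → ℂ) :=
    { toFun := fun A => A.mulVec v
      map_add' := fun A B => Matrix.add_mulVec A B v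
      map_smul' := fun c A => Matrix.smul_mulVec c A v }
  have hφ : Continuous φ := φ.continuous_of_finiteDimensional
  have h2 := hsum.map φ hφ
  have h3 : HasSum (fun n : ℕ => ((Nat.factorial n : ℂ))⁻¹ * μ ^ n) (Complex.exp μ) := by
    rw [Complex.exp_eq_exp_ℂ]
    exact NormedSpace.exp_series_hasSum_exp' (𝕂 := ℂ) μ
  have h4 := h3.smul_const v
  refine h4.unique ?_ |>.symm
  convert h2 using 2 with n
  swap
  · rfl
  show _ = ((Nat.factorial n : ℂ)⁻¹ • M ^ n).mulVec v
  rw [Matrix.smul_mulVec, hpow, smul_smul]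

/-! ### auxiliary: the sine bound -/

lemma sin_lower {N : ℕ} (hN : 2 ≤ N) {x : ℝ} (h1 : Real.pi / N ≤ x)
    (h2 : x ≤ Real.pi - Real.pi / N) : Real.sin (Real.pi / N) ≤ Real.sin x := by
  have hpi := Real.pi_pos
  have hN2 : Real.pi / N ≤ Real.pi / 2 := by
    apply div_le_div_of_nonneg_left hpi.le (by norm_num)
    exact_mod_cast hN
  have hNpos : 0 < Real.pi / N := by positivity
  rcases le_or_gt x (Real.pi / 2) with h | h
  · exact Real.strictMonoOn_sin.monotoneOn
      ⟨by linarith, by linarith⟩ ⟨by linarith, h⟩ h1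
  · rw [← Real.sin_pi_sub x]
    exact Real.strictMonoOn_sin.monotoneOn
      ⟨by linarith, by linarith⟩ ⟨by linarith, by linarith⟩ (by linarith)
set_option maxHeartbeats 1600000 in
/-- with δ = min{β, 2λ sin²(π/N)} > 0, there is C > 0 such that for every
z ∈ ℂ^{2N} whose first N coordinates sum to zero and every t ≥ 0,
‖e^{Bt} z‖ ≤ C ‖z‖ e^{−δt}; in particular e^{Bt} z → 0 as t → ∞ for such z. -/
theorem stmt7 (N : ℕ) (hN : 2 ≤ N) (lam beta : ℝ) (hlam : 0 < lam) (hbeta : 0 < beta)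
    (hinv : ∀ k < N, (beta : ℂ) + lam * (gam N k - 1) ≠ 0)
    (δ : ℝ) (hδ : δ = min beta (2 * lam * Real.sin (Real.pi / N) ^ 2)) :
    (0 < δ) ∧
    (∃ C > (0 : ℝ), ∀ z : Fin N ⊕ Fin N → ℂ, (∑ n : Fin N, z (Sum.inl n)) = 0 →
      ∀ t : ℝ, 0 ≤ t →
        eucNorm ((NormedSpace.exp ((t : ℂ) • blockB N lam beta)).mulVec z) ≤
          C * eucNorm z * Real.exp (-δ * t)) ∧
    (∀ z : Fin N ⊕ Fin N → ℂ, (∑ n : Fin N, z (Sum.inl n)) = 0 →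
      Tendsto (fun t : ℝ => (NormedSpace.exp ((t : ℂ) • blockB N lam beta)).mulVec z)
        atTop (nhds 0)) := by
  have hN0 : N ≠ 0 := by omega
  have hNC : (N : ℂ) ≠ 0 := Nat.cast_ne_zero.mpr hN0
  have hNR : (0 : ℝ) < N := by exact_mod_cast Nat.pos_of_ne_zero hN0
  have hN1R : (1 : ℝ) < N := by exact_mod_cast hN
  have hpi := Real.pi_pos
  have hsin : 0 < Real.sin (Real.pi / N) :=
    Real.sin_pos_of_pos_of_lt_pi (by positivity) (div_lt_self hpi hN1R)
  have hδpos : 0 < δ := by rw [hδ]; exact lt_min hbeta (by positivity)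
  -- eigen data
  set ck : Fin N → ℂ := fun k => -(gam N k - 1) / ((beta : ℂ) + lam * (gam N k - 1)) with hckdef
  have hck : ∀ k : Fin N,
      (lam : ℂ) * (gam N (k : ℕ) - 1) * ck k + (gam N (k : ℕ) - 1) = -(beta : ℂ) * ck k := by
    intro k
    have hd := hinv k k.isLt
    rw [hckdef]
    field_simp
    ring
  set u : Fin N → (Fin N ⊕ Fin N → ℂ) := fun k => Sum.elim (fv N (k : ℕ)) 0 with hudef
  set w : Fin N → (Fin N ⊕ Fin N → ℂ) :=
    fun k => Sum.elim (ck k • fv N (k : ℕ)) (fv N (k : ℕ)) with hwdef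
  set k0 : Fin N := ⟨0, by omega⟩ with hk0def
  have hck0 : ck k0 = 0 := by
    rw [hckdef]
    simp [hk0def, gam_zero]
  -- scalar decay bounds
  have keyU : ∀ k : Fin N, (k : ℕ) ≠ 0 → ∀ t : ℝ, 0 ≤ t →
      Complex.abs (Complex.exp ((t : ℂ) * ((lam : ℂ) * (gam N (k : ℕ) - 1))))
        ≤ Real.exp (-δ * t) := by
    intro k hk t ht
    rw [Complex.abs_exp]
    apply Real.exp_le_exp.mpr
    have hre : ((t : ℂ) * ((lam : ℂ) * (gam N (k : ℕ) - 1))).re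
        = t * (lam * ((gam N (k : ℕ)).re - 1)) := by
      simp [Complex.mul_re, Complex.ofReal_re, Complex.ofReal_im, Complex.sub_re,
        Complex.sub_im, Complex.one_re, Complex.one_im]
    rw [hre, gam_re]
    have hcos : Real.cos (2 * Real.pi * (k : ℕ) / N)
        = 1 - 2 * Real.sin (Real.pi * (k : ℕ) / N) ^ 2 := by
      have := Real.sin_sq_eq_half_sub (x := Real.pi * (k : ℕ) / N)
      have harg : 2 * (Real.pi * (k : ℕ) / N) = 2 * Real.pi * (k : ℕ) / N := by ring
      rw [harg] at this
      linarith
    rw [hcos]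
    have hk1 : (1 : ℝ) ≤ (k : ℕ) := by exact_mod_cast Nat.one_le_iff_ne_zero.mpr hk
    have hkN : ((k : ℕ) : ℝ) ≤ N - 1 := by
      have : (k : ℕ) ≤ N - 1 := by omega
      have h2 : ((k : ℕ) : ℝ) ≤ ((N - 1 : ℕ) : ℝ) := by exact_mod_cast this
      rw [Nat.cast_sub (by omega)] at h2
      simpa using h2
    have hs : Real.sin (Real.pi / N) ≤ Real.sin (Real.pi * (k : ℕ) / N) := by
      apply sin_lower hN
      · rw [div_le_div_iff₀ hNR hNR]
        have h1 : Real.pi ≤ Real.pi * (k : ℕ) := by nlinarith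
        nlinarith [mul_le_mul_of_nonneg_right h1 hNR.le]
      · rw [div_le_iff₀ hNR]
        have hfield : (Real.pi / N) * N = Real.pi := div_mul_cancel₀ _ (ne_of_gt hNR)
        nlinarith [mul_le_mul_of_nonneg_left hkN hpi.le, hfield]
    have hssq : Real.sin (Real.pi / N) ^ 2 ≤ Real.sin (Real.pi * (k : ℕ) / N) ^ 2 :=
      pow_le_pow_left₀ hsin.le hs 2
    have hδle : δ ≤ 2 * lam * Real.sin (Real.pi * (k : ℕ) / N) ^ 2 := by
      rw [hδ]
      refine le_trans (min_le_right _ _) ?_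
      nlinarith
    nlinarith [mul_le_mul_of_nonneg_left hδle ht]
  have keyW : ∀ t : ℝ, 0 ≤ t →
      Complex.abs (Complex.exp ((t : ℂ) * (-(beta : ℂ)))) ≤ Real.exp (-δ * t) := by
    intro t ht
    rw [Complex.abs_exp]
    apply Real.exp_le_exp.mpr
    have hre : ((t : ℂ) * (-(beta : ℂ))).re = t * (-beta) := by
      simp [Complex.mul_re]
    rw [hre]
    have : δ ≤ beta := hδ ▸ min_le_left _ _
    nlinarith
  -- the constant
  set Cc : ℝ := ∑ k : Fin N, Complex.abs (ck k) with hCcdef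
  have hCc0 : 0 ≤ Cc := Finset.sum_nonneg fun k _ => AbsoluteValue.nonneg _ _
  set C : ℝ := 2 * (N : ℝ) ^ 2 * (1 + Cc) with hCdef
  have hCpos : 0 < C := by positivity
  -- the main estimate
  have hmain : ∀ z : Fin N ⊕ Fin N → ℂ, (∑ n : Fin N, z (Sum.inl n)) = 0 →
      ∀ t : ℝ, 0 ≤ t →
        eucNorm ((NormedSpace.exp ((t : ℂ) • blockB N lam beta)).mulVec z) ≤
          C * eucNorm z * Real.exp (-δ * t) := by
    intro z hz t ht
    set y : Fin N → ℂ := fun n => z (Sum.inr n) with hydef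
    set b : Fin N → ℂ :=
      fun k => (N : ℂ)⁻¹ * ∑ n : Fin N, gam N (k : ℕ) ^ ((N - 1) * (n : ℕ)) * y n with hbdef
    set x' : Fin N → ℂ :=
      fun n => z (Sum.inl n) - ∑ j : Fin N, (b j * ck j) * fv N (j : ℕ) n with hxdef
    set a : Fin N → ℂ :=
      fun k => (N : ℂ)⁻¹ * ∑ n : Fin N, gam N (k : ℕ) ^ ((N - 1) * (n : ℕ)) * x' n with hadef
    -- decomposition
    have hdecomp : z = (∑ k : Fin N, a k • u k) + (∑ k : Fin N, b k • w k) := by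
      funext i
      cases i with
      | inl n =>
        have h1 : ∑ k : Fin N, a k * fv N (k : ℕ) n = x' n := by
          rw [hadef]; exact fourier_inv hN x' n
        have ev1 : (∑ k : Fin N, a k • u k) (Sum.inl n) = ∑ k : Fin N, a k * fv N (k : ℕ) n := by
          rw [Finset.sum_apply]
          exact Finset.sum_congr rfl fun k _ => by simp [hudef]
        have ev2 : (∑ k : Fin N, b k • w k) (Sum.inl n)
            = ∑ k : Fin N, (b k * ck k) * fv N (k : ℕ) n := by
          rw [Finset.sum_apply]
          refine Finset.sum_congr rfl fun k _ => ?_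
          simp [hwdef, mul_assoc]
        rw [Pi.add_apply, ev1, ev2, h1]
        simp only [hxdef]
        ring
      | inr n =>
        have ev1 : (∑ k : Fin N, a k • u k) (Sum.inr n) = 0 := by
          rw [Finset.sum_apply]
          exact Finset.sum_eq_zero fun k _ => by simp [hudef]
        have ev2 : (∑ k : Fin N, b k • w k) (Sum.inr n)
            = ∑ k : Fin N, b k * fv N (k : ℕ) n := by
          rw [Finset.sum_apply]
          exact Finset.sum_congr rfl fun k _ => by simp [hwdef]
        rw [Pi.add_apply, ev1, ev2, hbdef, zero_add]
        exact (fourier_inv hN y n).symm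
    -- vanishing of a k0
    have hsum_fv : ∀ j : Fin N, ∑ n : Fin N, fv N (j : ℕ) n
        = if j = k0 then (N : ℂ) else 0 := by
      intro j
      have := gam_geom_sum hN (j : ℕ)
      rw [show (∑ k : Fin N, gam N (j : ℕ) ^ (k : ℕ)) = ∑ n : Fin N, fv N (j : ℕ) n from rfl]
        at this
      rw [this]
      congr 1
      simp only [eq_iff_iff]
      constructor
      · intro hd
        have : (j : ℕ) = 0 := Nat.eq_zero_of_dvd_of_lt hd j.isLt
        exact Fin.ext (by simp [hk0def, this])
      · intro hj; rw [hj]; simp [hk0def]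
    have ha0 : a k0 = 0 := by
      have hone : ∀ n : Fin N, gam N (k0 : ℕ) ^ ((N - 1) * (n : ℕ)) = 1 := by
        intro n
        rw [show (k0 : ℕ) = 0 from rfl, gam_zero, one_pow]
      have hsx : ∑ n : Fin N, x' n = 0 := by
        rw [hxdef]
        simp only
        rw [Finset.sum_sub_distrib, hz, Finset.sum_comm]
        simp only [← Finset.mul_sum]
        rw [Finset.sum_congr rfl (fun j _ => by rw [hsum_fv j])]
        rw [Finset.sum_congr rfl (fun j (_ : j ∈ univ) => by
          rw [show (b j * ck j) * (if j = k0 then (N : ℂ) else 0)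
            = if j = k0 then (b j * ck j) * N else 0 from by split_ifs <;> simp])]
        rw [Finset.sum_ite_eq' univ k0 (fun j => (b j * ck j) * (N : ℂ))]
        simp [hck0]
      rw [hadef]
      simp only
      rw [Finset.sum_congr rfl (fun n _ => by rw [hone n, one_mul]), hsx, mul_zero]
    -- coefficient bounds
    have hb_bound : ∀ k : Fin N, Complex.abs (b k) ≤ eucNorm z := by
      intro k
      rw [hbdef]
      simp only
      rw [_root_.map_mul, map_inv₀, Complex.abs_natCast]
      calc (N : ℝ)⁻¹ * Complex.abs (∑ n : Fin N, gam N (k : ℕ) ^ ((N - 1) * (n : ℕ)) * y n)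
          ≤ (N : ℝ)⁻¹ * ∑ n : Fin N, Complex.abs (gam N (k : ℕ) ^ ((N - 1) * (n : ℕ)) * y n) := by
            apply mul_le_mul_of_nonneg_left (Complex.abs.sum_le _ _) (by positivity)
        _ = (N : ℝ)⁻¹ * ∑ n : Fin N, Complex.abs (y n) := by
            congr 1
            apply Finset.sum_congr rfl
            intro n _
            rw [_root_.map_mul, _root_.map_pow, gam_abs, one_pow, one_mul]
        _ ≤ (N : ℝ)⁻¹ * ∑ n : Fin N, eucNorm z := by
            apply mul_le_mul_of_nonneg_left ?_ (by positivity)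
            exact Finset.sum_le_sum fun n _ => abs_le_eucNorm z (Sum.inr n)
        _ = eucNorm z := by
            rw [Finset.sum_const, Finset.card_univ, Fintype.card_fin, nsmul_eq_mul]
            field_simp
    have hck_le : ∀ k : Fin N, Complex.abs (ck k) ≤ Cc := by
      intro k
      rw [hCcdef]
      exact Finset.single_le_sum (f := fun j => Complex.abs (ck j))
        (fun j _ => AbsoluteValue.nonneg _ _) (mem_univ k)
    have hx'_bound : ∀ n : Fin N, Complex.abs (x' n) ≤ (1 + Cc) * eucNorm z := by
      intro n
      rw [hxdef]
      simp only
      calc Complex.abs (z (Sum.inl n) - ∑ j : Fin N, (b j * ck j) * fv N (j : ℕ) n)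
          ≤ Complex.abs (z (Sum.inl n))
            + Complex.abs (∑ j : Fin N, (b j * ck j) * fv N (j : ℕ) n) := by
            exact (AbsoluteValue.sub_le_add _ _ _)
        _ ≤ eucNorm z + ∑ j : Fin N, Complex.abs (ck j) * eucNorm z := by
            apply add_le_add (abs_le_eucNorm z (Sum.inl n))
            refine le_trans (Complex.abs.sum_le _ _) (Finset.sum_le_sum fun j _ => ?_)
            rw [_root_.map_mul, _root_.map_mul, fv_abs, mul_one, mul_comm]
            exact mul_le_mul_of_nonneg_left (hb_bound j) (AbsoluteValue.nonneg _ _)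
        _ = (1 + Cc) * eucNorm z := by
            rw [← Finset.sum_mul, ← hCcdef]
            ring
    have ha_bound : ∀ k : Fin N, Complex.abs (a k) ≤ (1 + Cc) * eucNorm z := by
      intro k
      rw [hadef]
      simp only
      rw [_root_.map_mul, map_inv₀, Complex.abs_natCast]
      calc (N : ℝ)⁻¹ * Complex.abs (∑ n : Fin N, gam N (k : ℕ) ^ ((N - 1) * (n : ℕ)) * x' n)
          ≤ (N : ℝ)⁻¹ * ∑ n : Fin N, Complex.abs (x' n) := by
            apply mul_le_mul_of_nonneg_left ?_ (by positivity)
            refine le_trans (Complex.abs.sum_le _ _) (le_of_eq ?_)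
            apply Finset.sum_congr rfl
            intro n _
            rw [_root_.map_mul, _root_.map_pow, gam_abs, one_pow, one_mul]
        _ ≤ (N : ℝ)⁻¹ * ∑ n : Fin N, (1 + Cc) * eucNorm z := by
            apply mul_le_mul_of_nonneg_left ?_ (by positivity)
            exact Finset.sum_le_sum fun n _ => hx'_bound n
        _ ≤ (1 + Cc) * eucNorm z := by
            rw [Finset.sum_const, Finset.card_univ, Fintype.card_fin, nsmul_eq_mul]
            rw [← mul_assoc, inv_mul_cancel₀ (by positivity : (N:ℝ) ≠ 0), one_mul]
    -- norms of eigenvectors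
    have hu_norm : ∀ k : Fin N, eucNorm (u k) ≤ N := by
      intro k
      refine le_trans (eucNorm_le_sum _) ?_
      rw [Fintype.sum_sum_type]
      simp only [hudef, Sum.elim_inl, Sum.elim_inr, Pi.zero_apply, map_zero,
        Finset.sum_const_zero, add_zero]
      rw [Finset.sum_congr rfl (fun n _ => fv_abs N (k : ℕ) n), Finset.sum_const,
        Finset.card_univ, Fintype.card_fin, nsmul_eq_mul, mul_one]
    have hw_norm : ∀ k : Fin N, eucNorm (w k) ≤ (1 + Cc) * N := by
      intro k
      refine le_trans (eucNorm_le_sum _) ?_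
      rw [Fintype.sum_sum_type]
      simp only [hwdef, Sum.elim_inl, Sum.elim_inr, Pi.smul_apply, smul_eq_mul]
      have e1 : ∑ n : Fin N, Complex.abs (ck k * fv N (k : ℕ) n)
          = Complex.abs (ck k) * N := by
        rw [Finset.sum_congr rfl (fun n _ => by rw [_root_.map_mul, fv_abs, mul_one]),
          Finset.sum_const, Finset.card_univ, Fintype.card_fin, nsmul_eq_mul, mul_comm]
      have e2 : ∑ n : Fin N, Complex.abs (fv N (k : ℕ) n) = (N : ℝ) := by
        rw [Finset.sum_congr rfl (fun n _ => fv_abs N (k : ℕ) n), Finset.sum_const,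
          Finset.card_univ, Fintype.card_fin, nsmul_eq_mul, mul_one]
      rw [e1, e2]
      have := hck_le k
      nlinarith
    -- eigen action of the exponential
    have hu_exp : ∀ k : Fin N, (NormedSpace.exp ((t : ℂ) • blockB N lam beta)).mulVec (u k)
        = Complex.exp ((t : ℂ) * ((lam : ℂ) * (gam N (k : ℕ) - 1))) • u k := by
      intro k
      apply exp_mulVec_eigen
      rw [Matrix.smul_mulVec, hudef]
      simp only
      rw [blockB_mulVec_u hN lam beta (k : ℕ), smul_smul]
    have hw_exp : ∀ k : Fin N, (NormedSpace.exp ((t : ℂ) • blockB N lam beta)).mulVec (w k)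
        = Complex.exp ((t : ℂ) * (-(beta : ℂ))) • w k := by
      intro k
      apply exp_mulVec_eigen
      rw [Matrix.smul_mulVec, hwdef]
      simp only
      rw [blockB_mulVec_w hN lam beta (k : ℕ) (ck k) (hck k), smul_smul]
    -- expand
    have hexpand : (NormedSpace.exp ((t : ℂ) • blockB N lam beta)).mulVec z
        = (∑ k : Fin N, (a k * Complex.exp ((t : ℂ) * ((lam : ℂ) * (gam N (k : ℕ) - 1)))) • u k)
        + (∑ k : Fin N, (b k * Complex.exp ((t : ℂ) * (-(beta : ℂ)))) • w k) := by
      conv_lhs => rw [hdecomp]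
      rw [← Matrix.mulVecLin_apply, map_add, map_sum, map_sum]
      congr 1
      · apply Finset.sum_congr rfl
        intro k _
        rw [_root_.map_smul, Matrix.mulVecLin_apply, hu_exp k, smul_smul]
      · apply Finset.sum_congr rfl
        intro k _
        rw [_root_.map_smul, Matrix.mulVecLin_apply, hw_exp k, smul_smul]
    -- final estimate
    rw [hexpand]
    have hterm1 : ∀ k : Fin N,
        eucNorm ((a k * Complex.exp ((t : ℂ) * ((lam : ℂ) * (gam N (k : ℕ) - 1)))) • u k)
          ≤ (1 + Cc) * eucNorm z * Real.exp (-δ * t) * N := by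
      intro k
      rw [eucNorm_smul, _root_.map_mul]
      by_cases hk : (k : ℕ) = 0
      · have : a k = 0 := by
          have : k = k0 := Fin.ext (by simp [hk0def, hk])
          rw [this, ha0]
        rw [this, _root_.map_zero, zero_mul, zero_mul]
        exact mul_nonneg (mul_nonneg (mul_nonneg (by linarith) (eucNorm_nonneg z))
          (Real.exp_pos _).le) hNR.le
      · calc Complex.abs (a k)
              * Complex.abs (Complex.exp ((t : ℂ) * ((lam : ℂ) * (gam N (k : ℕ) - 1))))
              * eucNorm (u k)
            ≤ ((1 + Cc) * eucNorm z) * Real.exp (-δ * t) * (N : ℝ) := by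
              have h1 := ha_bound k
              have h2 := keyU k hk t ht
              have h3 := hu_norm k
              have e0 : (0:ℝ) ≤ Complex.abs (a k) := AbsoluteValue.nonneg _ _
              have e1 : (0:ℝ) ≤ Complex.abs
                (Complex.exp ((t : ℂ) * ((lam : ℂ) * (gam N (k : ℕ) - 1)))) :=
                AbsoluteValue.nonneg _ _
              have e2 : (0:ℝ) ≤ eucNorm (u k) := eucNorm_nonneg _
              have e3 : (0:ℝ) ≤ eucNorm z := eucNorm_nonneg _
              have e4 : (0:ℝ) < Real.exp (-δ * t) := Real.exp_pos _
              have hAB : Complex.abs (a k)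
                  * Complex.abs (Complex.exp ((t : ℂ) * ((lam : ℂ) * (gam N (k : ℕ) - 1))))
                  ≤ ((1 + Cc) * eucNorm z) * Real.exp (-δ * t) :=
                mul_le_mul h1 h2 e1 (mul_nonneg (by linarith) e3)
              exact mul_le_mul hAB h3 e2
                (mul_nonneg (mul_nonneg (by linarith) e3) e4.le)
          _ = (1 + Cc) * eucNorm z * Real.exp (-δ * t) * N := by ring
    have hterm2 : ∀ k : Fin N,
        eucNorm ((b k * Complex.exp ((t : ℂ) * (-(beta : ℂ)))) • w k)
          ≤ eucNorm z * Real.exp (-δ * t) * ((1 + Cc) * N) := by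
      intro k
      rw [eucNorm_smul, _root_.map_mul]
      have h1 := hb_bound k
      have h2 := keyW t ht
      have h3 := hw_norm k
      have e0 : (0:ℝ) ≤ Complex.abs (b k) := AbsoluteValue.nonneg _ _
      have e1 : (0:ℝ) ≤ Complex.abs (Complex.exp ((t : ℂ) * (-(beta : ℂ)))) :=
        AbsoluteValue.nonneg _ _
      have e2 : (0:ℝ) ≤ eucNorm (w k) := eucNorm_nonneg _
      have e3 : (0:ℝ) ≤ eucNorm z := eucNorm_nonneg _
      have e4 : (0:ℝ) < Real.exp (-δ * t) := Real.exp_pos _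
      have hAB : Complex.abs (b k) * Complex.abs (Complex.exp ((t : ℂ) * (-(beta : ℂ))))
          ≤ eucNorm z * Real.exp (-δ * t) := mul_le_mul h1 h2 e1 e3
      exact mul_le_mul hAB h3 e2 (mul_nonneg e3 e4.le)
    calc eucNorm ((∑ k : Fin N, (a k * Complex.exp ((t : ℂ) * ((lam : ℂ)
            * (gam N (k : ℕ) - 1)))) • u k)
          + (∑ k : Fin N, (b k * Complex.exp ((t : ℂ) * (-(beta : ℂ)))) • w k))
        ≤ eucNorm (∑ k : Fin N, (a k * Complex.exp ((t : ℂ) * ((lam : ℂ)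
            * (gam N (k : ℕ) - 1)))) • u k)
          + eucNorm (∑ k : Fin N, (b k * Complex.exp ((t : ℂ) * (-(beta : ℂ)))) • w k) :=
          eucNorm_add_le _ _
      _ ≤ (∑ k : Fin N, eucNorm ((a k * Complex.exp ((t : ℂ) * ((lam : ℂ)
            * (gam N (k : ℕ) - 1)))) • u k))
          + (∑ k : Fin N, eucNorm ((b k * Complex.exp ((t : ℂ) * (-(beta : ℂ)))) • w k)) :=
          add_le_add (eucNorm_sum_le _ _) (eucNorm_sum_le _ _)
      _ ≤ (∑ _k : Fin N, (1 + Cc) * eucNorm z * Real.exp (-δ * t) * N)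
          + (∑ _k : Fin N, eucNorm z * Real.exp (-δ * t) * ((1 + Cc) * N)) :=
          add_le_add (Finset.sum_le_sum fun k _ => hterm1 k)
            (Finset.sum_le_sum fun k _ => hterm2 k)
      _ = C * eucNorm z * Real.exp (-δ * t) := by
          rw [Finset.sum_const, Finset.sum_const, Finset.card_univ, Fintype.card_fin,
            nsmul_eq_mul, nsmul_eq_mul, hCdef]
          ring
  refine ⟨hδpos, ⟨C, hCpos, hmain⟩, ?_⟩
  -- convergence
  intro z hz
  rw [tendsto_pi_nhds]
  intro i
  have hg : Tendsto (fun t : ℝ => C * eucNorm z * Real.exp (-δ * t)) atTop (nhds 0) := by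
    have h2 : Tendsto (fun t : ℝ => Real.exp (-δ * t)) atTop (nhds 0) := by
      have h1 : Tendsto (fun t : ℝ => δ * t) atTop atTop :=
        Tendsto.const_mul_atTop hδpos tendsto_id
      have := Real.tendsto_exp_neg_atTop_nhds_zero.comp h1
      apply this.congr
      intro t
      simp [Function.comp, neg_mul]
    have h3 := h2.const_mul (C * eucNorm z)
    rw [mul_zero] at h3
    exact h3.congr fun t => by ring
  apply squeeze_zero_norm' ?_ hg
  filter_upwards [eventually_ge_atTop (0 : ℝ)] with t ht
  calc ‖(NormedSpace.exp ((t : ℂ) • blockB N lam beta)).mulVec z i‖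
      = Complex.abs ((NormedSpace.exp ((t : ℂ) • blockB N lam beta)).mulVec z i) := rfl
    _ ≤ eucNorm ((NormedSpace.exp ((t : ℂ) • blockB N lam beta)).mulVec z) :=
        abs_le_eucNorm _ i
    _ ≤ C * eucNorm z * Real.exp (-δ * t) := hmain z hz t ht
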